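/- arXiv:1304.3042 — 2 statements merged into one kernel-verified Lean document; each statement's English description precedes it below -/
import Mathlib

section
/- Assume 0 ∈ I. For a function f : Iⁿ → ℝ the following are equivalent: (a) f is comonotonically modular; (b) the restrictions f|_{I₊ⁿ} and f|_{I₋ⁿ} are comonotonically modular and f(x) + f(0) = f(x⁺) + f(−x⁻) for every x ∈ Iⁿ; (c) f|_{I₊ⁿ} is invariant under horizontal min-differences, f|_{I₋ⁿ} is invariant under horizontal max-differences, and f(x) + f(0) = f(x⁺) + f(−x⁻) for every x ∈ Iⁿ. -/
/-- `S↑_σ(i)` (0-indexed): the set `{σ(i), σ(i+1), …, σ(n-1)}`.  For `i = n` it is empty. -/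
def SUp {n : ℕ} (σ : Equiv.Perm (Fin n)) (i : ℕ) : Finset (Fin n) :=
  (Finset.univ.filter (fun j : Fin n => i ≤ (j : ℕ))).image σ

/-- `S↓_σ(i)`: the set `{σ(0), …, σ(i-1)}`.  For `i = 0` it is empty. -/
def SDown {n : ℕ} (σ : Equiv.Perm (Fin n)) (i : ℕ) : Finset (Fin n) :=
  (Finset.univ.filter (fun j : Fin n => (j : ℕ) < i)).image σ

/-- Two tuples are comonotonic if some permutation sorts both nondecreasingly. -/
def Comonotone {n : ℕ} (x y : Fin n → ℝ) : Prop :=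
  ∃ σ : Equiv.Perm (Fin n), Monotone (x ∘ σ) ∧ Monotone (y ∘ σ)

/-- The tuple `r·1_S`. -/
def indTuple {n : ℕ} (S : Finset (Fin n)) (r : ℝ) : Fin n → ℝ :=
  fun j => if j ∈ S then r else 0

/-- The signed Choquet integral of `x` w.r.t. `v`, computed via a sorting permutation. -/
noncomputable def Cv {n : ℕ} (v : Finset (Fin n) → ℝ) (x : Fin n → ℝ) : ℝ :=
  ∑ i : Fin n,
    x (Tuple.sort x i) *
      (v (SUp (Tuple.sort x) (i : ℕ)) - v (SUp (Tuple.sort x) ((i : ℕ) + 1)))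

/-- `f` is the restriction to `Iⁿ` of a signed Choquet integral. -/
def IsSignedChoquetOn {n : ℕ} (I : Set ℝ) (f : (Fin n → ℝ) → ℝ) : Prop :=
  ∃ v : Finset (Fin n) → ℝ, v ∅ = 0 ∧
    ∀ σ : Equiv.Perm (Fin n), ∀ x : Fin n → ℝ, (∀ i, x i ∈ I) → Monotone (x ∘ σ) →
      f x = ∑ i : Fin n, x (σ i) * (v (SUp σ (i : ℕ)) - v (SUp σ ((i : ℕ) + 1)))

/-- `f` is the restriction to `Iⁿ` of a symmetric signed Choquet integral
`Č_v(x) = C_v(x⁺) - C_v(x⁻)`. -/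
def IsSymSignedChoquetOn {n : ℕ} (I : Set ℝ) (f : (Fin n → ℝ) → ℝ) : Prop :=
  ∃ v : Finset (Fin n) → ℝ, v ∅ = 0 ∧
    ∀ x : Fin n → ℝ, (∀ i, x i ∈ I) →
      f x = Cv v (fun i => max (x i) 0) - Cv v (fun i => max (-x i) 0)

/-- Comonotonic modularity (on tuples with entries in `D`). -/
def ComonModularOn {n : ℕ} (D : Set ℝ) (f : (Fin n → ℝ) → ℝ) : Prop :=
  ∀ x y : Fin n → ℝ, (∀ i, x i ∈ D) → (∀ i, y i ∈ D) → Comonotone x y →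
    f x + f y = f (fun i => min (x i) (y i)) + f (fun i => max (x i) (y i))

/-- Comonotonic additivity (on tuples with entries in `D`). -/
def ComonAdditiveOn {n : ℕ} (D : Set ℝ) (f : (Fin n → ℝ) → ℝ) : Prop :=
  ∀ x y : Fin n → ℝ, (∀ i, x i ∈ D) → (∀ i, y i ∈ D) → Comonotone x y →
    (∀ i, x i + y i ∈ D) → f (fun i => x i + y i) = f x + f y

/-- Comonotonic maxitivity. -/
def ComonMaxitiveOn {n : ℕ} (D : Set ℝ) (f : (Fin n → ℝ) → ℝ) : Prop :=
  ∀ x y : Fin n → ℝ, (∀ i, x i ∈ D) → (∀ i, y i ∈ D) → Comonotone x y →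
    f (fun i => max (x i) (y i)) = max (f x) (f y)

/-- Comonotonic minitivity. -/
def ComonMinitiveOn {n : ℕ} (D : Set ℝ) (f : (Fin n → ℝ) → ℝ) : Prop :=
  ∀ x y : Fin n → ℝ, (∀ i, x i ∈ D) → (∀ i, y i ∈ D) → Comonotone x y →
    f (fun i => min (x i) (y i)) = min (f x) (f y)

/-- Horizontal min-additivity. -/
def HorizMinAdditiveOn {n : ℕ} (D : Set ℝ) (f : (Fin n → ℝ) → ℝ) : Prop :=
  ∀ x : Fin n → ℝ, (∀ i, x i ∈ D) → ∀ c ∈ D, (∀ i, x i - min (x i) c ∈ D) →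
    f x = f (fun i => min (x i) c) + f (fun i => x i - min (x i) c)

/-- Horizontal max-additivity. -/
def HorizMaxAdditiveOn {n : ℕ} (D : Set ℝ) (f : (Fin n → ℝ) → ℝ) : Prop :=
  ∀ x : Fin n → ℝ, (∀ i, x i ∈ D) → ∀ c ∈ D, (∀ i, x i - max (x i) c ∈ D) →
    f x = f (fun i => max (x i) c) + f (fun i => x i - max (x i) c)

/-- Horizontal median-additivity (for `I` centered at `0`). -/
def HorizMedAdditiveOn {n : ℕ} (I : Set ℝ) (f : (Fin n → ℝ) → ℝ) : Prop :=
  ∀ x : Fin n → ℝ, (∀ i, x i ∈ I) → ∀ c ∈ I, 0 ≤ c →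
    f x = f (fun i => max (-c) (min (x i) c)) + f (fun i => x i - min (x i) c)
        + f (fun i => x i - max (x i) (-c))

/-- Invariance under horizontal min-differences (for domains of nonnegative tuples). -/
def InvHMinDiffOn {n : ℕ} (D : Set ℝ) (f : (Fin n → ℝ) → ℝ) : Prop :=
  ∀ x : Fin n → ℝ, (∀ i, x i ∈ D) → ∀ c ∈ D,
    f x - f (fun i => min (x i) c) =
      f (fun i => if x i ≤ c then 0 else x i) -
        f (fun i => min (if x i ≤ c then 0 else x i) c)

/-- Invariance under horizontal max-differences (for domains of nonpositive tuples). -/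
def InvHMaxDiffOn {n : ℕ} (D : Set ℝ) (f : (Fin n → ℝ) → ℝ) : Prop :=
  ∀ x : Fin n → ℝ, (∀ i, x i ∈ D) → ∀ c ∈ D,
    f x - f (fun i => max (x i) c) =
      f (fun i => if c ≤ x i then 0 else x i) -
        f (fun i => max (if c ≤ x i then 0 else x i) c)

/-- `⋀_{i ∈ S} x i`, with the convention that the empty infimum is `b`. -/
noncomputable def infWith {n : ℕ} (b : ℝ) (S : Finset (Fin n)) (x : Fin n → ℝ) : ℝ :=
  if h : S.Nonempty then S.inf' h x else b

/-- An `[a,b]`-valued capacity. -/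
def IsCapacityOn {n : ℕ} (a b : ℝ) (μ : Finset (Fin n) → ℝ) : Prop :=
  μ ∅ = a ∧ μ Finset.univ = b ∧ ∀ S T : Finset (Fin n), S ⊆ T → μ S ≤ μ T

/-- `f` is nondecreasing (in each argument) on tuples with entries in `D`. -/
def NondecreasingOn {n : ℕ} (D : Set ℝ) (f : (Fin n → ℝ) → ℝ) : Prop :=
  ∀ x y : Fin n → ℝ, (∀ i, x i ∈ D) → (∀ i, y i ∈ D) → (∀ i, x i ≤ y i) → f x ≤ f y

section CMHelpers

private lemma min3R (a b c : ℝ) : min (min a b) c = min (min a c) (min b c) := by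
  rcases le_total a b with h | h
  · rw [min_eq_left h, min_eq_left (min_le_min h le_rfl)]
  · rw [min_eq_right h, min_eq_right (min_le_min h le_rfl)]

private lemma max3R (a b c : ℝ) : max (max a b) c = max (max a c) (max b c) := by
  rcases le_total a b with h | h
  · rw [max_eq_right h, max_eq_right (max_le_max h le_rfl)]
  · rw [max_eq_left h, max_eq_left (max_le_max h le_rfl)]

private lemma negmaxR (a : ℝ) : -max (-a) 0 = min a 0 := by
  rcases le_total a 0 with h | h
  · rw [min_eq_left h, max_eq_left (by linarith), neg_neg]
  · rw [min_eq_right h, max_eq_right (by linarith), neg_zero]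

private lemma comon_zero {n : ℕ} (x : Fin n → ℝ) : Comonotone x (fun _ => (0:ℝ)) :=
  ⟨Tuple.sort x, Tuple.monotone_sort x, monotone_const⟩

private lemma comon_nest {n : ℕ} {x y : Fin n → ℝ} (h : Comonotone x y) (t : ℝ) :
    (∀ i, t < x i → t < y i) ∨ (∀ i, t < y i → t < x i) := by
  by_contra hc
  push_neg at hc
  obtain ⟨⟨i, hxi, hyi⟩, j, hyj, hxj⟩ := hc
  obtain ⟨σ, hx, hy⟩ := h
  rcases le_total (σ.symm i) (σ.symm j) with hab | hab
  · have h1 := hx hab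
    simp only [Function.comp_apply, Equiv.apply_symm_apply] at h1
    linarith
  · have h1 := hy hab
    simp only [Function.comp_apply, Equiv.apply_symm_apply] at h1
    linarith

private lemma phi_of_le {n : ℕ} (f : (Fin n → ℝ) → ℝ) {x y : Fin n → ℝ}
    (h : ∀ i, x i ≤ y i) :
    f x + f y = f (fun i => min (x i) (y i)) + f (fun i => max (x i) (y i)) := by
  have e1 : (fun i => min (x i) (y i)) = x := funext fun i => min_eq_left (h i)
  have e2 : (fun i => max (x i) (y i)) = y := funext fun i => max_eq_right (h i)
  rw [e1, e2]

private lemma mono_cut {n : ℕ} {x : Fin n → ℝ} {σ : Equiv.Perm (Fin n)}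
    (hσ : Monotone (x ∘ σ)) (c : ℝ) (hc : 0 ≤ c) :
    Monotone ((fun i => if x i ≤ c then 0 else x i) ∘ σ) := by
  intro a b hab
  have hxab : x (σ a) ≤ x (σ b) := hσ hab
  simp only [Function.comp_apply]
  by_cases hb : x (σ b) ≤ c
  · have ha : x (σ a) ≤ c := le_trans hxab hb
    simp [ha, hb]
  · by_cases ha : x (σ a) ≤ c
    · simp only [if_pos ha, if_neg hb]
      push_neg at hb; linarith
    · simp only [if_neg ha, if_neg hb]; exact hxab

private lemma mono_cutneg {n : ℕ} {x : Fin n → ℝ} {σ : Equiv.Perm (Fin n)}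
    (hσ : Monotone (x ∘ σ)) (c : ℝ) (hc : c ≤ 0) :
    Monotone ((fun i => if c ≤ x i then 0 else x i) ∘ σ) := by
  intro a b hab
  have hxab : x (σ a) ≤ x (σ b) := hσ hab
  simp only [Function.comp_apply]
  by_cases ha : c ≤ x (σ a)
  · have hb : c ≤ x (σ b) := le_trans ha hxab
    simp [ha, hb]
  · by_cases hb : c ≤ x (σ b)
    · simp only [if_neg ha, if_pos hb]
      push_neg at ha; linarith
    · simp only [if_neg ha, if_neg hb]; exact hxab

private lemma cm_mono {n : ℕ} {I D : Set ℝ} {f : (Fin n → ℝ) → ℝ}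
    (h : ComonModularOn I f) (hsub : D ⊆ I) : ComonModularOn D f :=
  fun x y hx hy hc => h x y (fun i => hsub (hx i)) (fun i => hsub (hy i)) hc

private lemma comon_neg {n : ℕ} {x y : Fin n → ℝ} (h : Comonotone x y) :
    Comonotone (fun i => -x i) (fun i => -y i) := by
  obtain ⟨σ, hx, hy⟩ := h
  refine ⟨Fin.revPerm.trans σ, ?_, ?_⟩ <;> intro a b hab <;>
    simp only [Function.comp_apply, Equiv.trans_apply, Fin.revPerm_apply] <;>
    [exact neg_le_neg (hx (Fin.rev_le_rev.mpr hab));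
     exact neg_le_neg (hy (Fin.rev_le_rev.mpr hab))]

end CMHelpers

private lemma modular_to_invmin {n : ℕ} {D : Set ℝ} (hD : ∀ r ∈ D, 0 ≤ r)
    (h0 : (0:ℝ) ∈ D) {f : (Fin n → ℝ) → ℝ}
    (hf : ComonModularOn D f) : InvHMinDiffOn D f := by
  intro x hx c hc
  have hc0 : 0 ≤ c := hD c hc
  have h1 := hf (fun i => min (x i) c) (fun i => if x i ≤ c then 0 else x i)
    (fun i => by
      show min (x i) c ∈ D
      rcases le_total (x i) c with h | h
      · rw [min_eq_left h]; exact hx i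
      · rw [min_eq_right h]; exact hc)
    (fun i => by
      show (if x i ≤ c then 0 else x i) ∈ D
      split_ifs with h
      · exact h0
      · exact hx i)
    ⟨Tuple.sort x, fun a b hab => min_le_min (Tuple.monotone_sort x hab) le_rfl,
      mono_cut (Tuple.monotone_sort x) c hc0⟩
  beta_reduce at h1
  have e1 : (fun i => min (min (x i) c) (if x i ≤ c then 0 else x i))
      = (fun i => min (if x i ≤ c then 0 else x i) c) := funext fun i => by
    by_cases h : x i ≤ c
    · rw [if_pos h, min_eq_left h, min_eq_right (hD _ (hx i)), min_eq_left hc0]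
    · push_neg at h
      rw [if_neg (not_le.mpr h), min_eq_right h.le, min_eq_left h.le]
  have e2 : (fun i => max (min (x i) c) (if x i ≤ c then 0 else x i)) = x := funext fun i => by
    by_cases h : x i ≤ c
    · rw [if_pos h, min_eq_left h]; exact max_eq_left (hD _ (hx i))
    · push_neg at h
      rw [if_neg (not_le.mpr h), min_eq_right h.le]; exact max_eq_right h.le
  rw [e1, e2] at h1
  linarith

private lemma modular_to_invmax {n : ℕ} {D : Set ℝ} (hD : ∀ r ∈ D, r ≤ 0)
    (h0 : (0:ℝ) ∈ D) {f : (Fin n → ℝ) → ℝ}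
    (hf : ComonModularOn D f) : InvHMaxDiffOn D f := by
  intro x hx c hc
  have hc0 : c ≤ 0 := hD c hc
  have h1 := hf (fun i => max (x i) c) (fun i => if c ≤ x i then 0 else x i)
    (fun i => by
      show max (x i) c ∈ D
      rcases le_total (x i) c with h | h
      · rw [max_eq_right h]; exact hc
      · rw [max_eq_left h]; exact hx i)
    (fun i => by
      show (if c ≤ x i then 0 else x i) ∈ D
      split_ifs with h
      · exact h0
      · exact hx i)
    ⟨Tuple.sort x, fun a b hab => max_le_max (Tuple.monotone_sort x hab) le_rfl,
      mono_cutneg (Tuple.monotone_sort x) c hc0⟩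
  beta_reduce at h1
  have e1 : (fun i => min (max (x i) c) (if c ≤ x i then 0 else x i)) = x := funext fun i => by
    by_cases h : c ≤ x i
    · rw [if_pos h, max_eq_left h]; exact min_eq_left (hD _ (hx i))
    · push_neg at h
      rw [if_neg (not_le.mpr h), max_eq_right h.le]; exact min_eq_right h.le
  have e2 : (fun i => max (max (x i) c) (if c ≤ x i then 0 else x i))
      = (fun i => max (if c ≤ x i then 0 else x i) c) := funext fun i => by
    by_cases h : c ≤ x i
    · rw [if_pos h, max_eq_left h, max_eq_right (hD _ (hx i)), max_eq_left hc0]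
    · push_neg at h
      rw [if_neg (not_le.mpr h), max_eq_right h.le, max_eq_left h.le]
  rw [e1, e2] at h1
  linarith

private lemma invmin_to_modular {n : ℕ} {D : Set ℝ} (hD : ∀ r ∈ D, 0 ≤ r)
    (h0 : (0:ℝ) ∈ D) {f : (Fin n → ℝ) → ℝ}
    (hf : InvHMinDiffOn D f) : ComonModularOn D f := by
  have main : ∀ N : ℕ, ∀ x y : Fin n → ℝ, (∀ i, x i ∈ D) → (∀ i, y i ∈ D) →
      Comonotone x y →
      (Finset.univ.filter fun i => 0 < x i).card
        + (Finset.univ.filter fun i => 0 < y i).card ≤ N →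
      f x + f y = f (fun i => min (x i) (y i)) + f (fun i => max (x i) (y i)) := by
    intro N
    induction N with
    | zero =>
      intro x y hx hy _ hcard
      have hxe : (Finset.univ.filter fun i => 0 < x i) = ∅ :=
        Finset.card_eq_zero.mp (by omega)
      have hye : (Finset.univ.filter fun i => 0 < y i) = ∅ :=
        Finset.card_eq_zero.mp (by omega)
      refine phi_of_le f fun i => ?_
      have h1 : ¬ 0 < x i := fun h => (Finset.notMem_empty i)
        (hxe ▸ Finset.mem_filter.mpr ⟨Finset.mem_univ i, h⟩)
      have h2 : ¬ 0 < y i := fun h => (Finset.notMem_empty i)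
        (hye ▸ Finset.mem_filter.mpr ⟨Finset.mem_univ i, h⟩)
      have := hD _ (hx i); have := hD _ (hy i)
      have hx0 : x i = 0 := by linarith [not_lt.mp h1]
      have hy0 : y i = 0 := by linarith [not_lt.mp h2]
      rw [hx0, hy0]
    | succ N ih =>
      intro x y hx hy hco hcard
      by_cases hne : ((Finset.univ.filter fun i => 0 < x i)
          ∪ (Finset.univ.filter fun i => 0 < y i)).Nonempty
      case neg =>
        rw [Finset.not_nonempty_iff_eq_empty, Finset.union_eq_empty] at hne
        refine phi_of_le f fun i => ?_
        have h1 : ¬ 0 < x i := fun h => (Finset.notMem_empty i)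
          (hne.1 ▸ Finset.mem_filter.mpr ⟨Finset.mem_univ i, h⟩)
        have h2 : ¬ 0 < y i := fun h => (Finset.notMem_empty i)
          (hne.2 ▸ Finset.mem_filter.mpr ⟨Finset.mem_univ i, h⟩)
        have := hD _ (hx i); have := hD _ (hy i)
        have hx0 : x i = 0 := by linarith [not_lt.mp h1]
        have hy0 : y i = 0 := by linarith [not_lt.mp h2]
        rw [hx0, hy0]
      case pos =>
        set A := Finset.univ.filter fun i => 0 < x i with hAdef
        set B := Finset.univ.filter fun i => 0 < y i with hBdef
        set g : Fin n → ℝ :=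
          fun i => if 0 < x i then (if 0 < y i then min (x i) (y i) else x i) else y i
          with hgdef
        set c := (A ∪ B).inf' hne g with hcdef
        have hgpos : ∀ i ∈ A ∪ B, 0 < g i := by
          intro i hi
          rcases Finset.mem_union.mp hi with h | h
          · have hxi : 0 < x i := (Finset.mem_filter.mp h).2
            by_cases hyi : 0 < y i
            · simp only [hgdef, if_pos hxi, if_pos hyi]; exact lt_min hxi hyi
            · simp only [hgdef, if_pos hxi, if_neg hyi]; exact hxi
          · have hyi : 0 < y i := (Finset.mem_filter.mp h).2
            by_cases hxi : 0 < x i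
            · simp only [hgdef, if_pos hxi, if_pos hyi]; exact lt_min hxi hyi
            · simp only [hgdef, if_neg hxi]; exact hyi
        have hcpos : 0 < c := (Finset.lt_inf'_iff hne).mpr hgpos
        obtain ⟨i0, hi0, hci0⟩ := Finset.exists_mem_eq_inf' hne g
        have hkey : (c = x i0 ∧ 0 < x i0) ∨ (c = y i0 ∧ 0 < y i0) := by
          by_cases hxi : 0 < x i0
          · by_cases hyi : 0 < y i0
            · rcases le_total (x i0) (y i0) with h | h
              · left; refine ⟨?_, hxi⟩
                rw [hcdef, hci0]; simp only [hgdef, if_pos hxi, if_pos hyi]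
                exact min_eq_left h
              · right; refine ⟨?_, hyi⟩
                rw [hcdef, hci0]; simp only [hgdef, if_pos hxi, if_pos hyi]
                exact min_eq_right h
            · left; refine ⟨?_, hxi⟩
              rw [hcdef, hci0]; simp only [hgdef, if_pos hxi, if_neg hyi]
          · have hyi : 0 < y i0 := by
              rcases Finset.mem_union.mp hi0 with h | h
              · exact absurd (Finset.mem_filter.mp h).2 hxi
              · exact (Finset.mem_filter.mp h).2
            right; refine ⟨?_, hyi⟩
            rw [hcdef, hci0]; simp only [hgdef, if_neg hxi]
        have hcD : c ∈ D := by
          rcases hkey with ⟨h, _⟩ | ⟨h, _⟩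
          · rw [h]; exact hx i0
          · rw [h]; exact hy i0
        have hcx : ∀ i, 0 < x i → c ≤ x i := by
          intro i hi
          have hiS : i ∈ A ∪ B :=
            Finset.mem_union_left _ (Finset.mem_filter.mpr ⟨Finset.mem_univ i, hi⟩)
          refine le_trans (Finset.inf'_le g hiS) ?_
          simp only [hgdef, if_pos hi]
          split_ifs with h2
          · exact min_le_left _ _
          · exact le_rfl
        have hcy : ∀ i, 0 < y i → c ≤ y i := by
          intro i hi
          have hiS : i ∈ A ∪ B :=
            Finset.mem_union_right _ (Finset.mem_filter.mpr ⟨Finset.mem_univ i, hi⟩)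
          refine le_trans (Finset.inf'_le g hiS) ?_
          simp only [hgdef, hi, if_true]
          split_ifs with h1
          · exact min_le_right _ _
          · exact le_rfl
        -- invariance instances
        have Hx := hf x hx c hcD
        have Hy := hf y hy c hcD
        have Hm := hf (fun i => min (x i) (y i))
          (fun i => by
            show min (x i) (y i) ∈ D
            rcases le_total (x i) (y i) with h | h
            · rw [min_eq_left h]; exact hx i
            · rw [min_eq_right h]; exact hy i) c hcD
        have HM := hf (fun i => max (x i) (y i))
          (fun i => by
            show max (x i) (y i) ∈ D
            rcases le_total (x i) (y i) with h | h
            · rw [max_eq_right h]; exact hy i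
            · rw [max_eq_left h]; exact hx i) c hcD
        beta_reduce at Hm HM
        -- pointwise rewriting facts
        have hm_if : ∀ i, (if min (x i) (y i) ≤ c then 0 else min (x i) (y i))
            = min (if x i ≤ c then 0 else x i) (if y i ≤ c then 0 else y i) := by
          intro i
          by_cases h1 : x i ≤ c <;> by_cases h2 : y i ≤ c
          · rw [if_pos (le_trans (min_le_left _ _) h1), if_pos h1, if_pos h2, min_self]
          · rw [if_pos (le_trans (min_le_left _ _) h1), if_pos h1, if_neg h2]
            exact (min_eq_left (hD _ (hy i))).symm
          · rw [if_pos (le_trans (min_le_right _ _) h2), if_neg h1, if_pos h2]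
            exact (min_eq_right (hD _ (hx i))).symm
          · push_neg at h1 h2
            rw [if_neg (not_le.mpr (lt_min h1 h2)), if_neg (not_le.mpr h1),
              if_neg (not_le.mpr h2)]
        have hM_if : ∀ i, (if max (x i) (y i) ≤ c then 0 else max (x i) (y i))
            = max (if x i ≤ c then 0 else x i) (if y i ≤ c then 0 else y i) := by
          intro i
          by_cases h1 : x i ≤ c <;> by_cases h2 : y i ≤ c
          · rw [if_pos (max_le h1 h2), if_pos h1, if_pos h2, max_self]
          · push_neg at h2
            rw [if_neg (not_le.mpr (lt_of_lt_of_le h2 (le_max_right _ _))),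
              if_pos h1, if_neg (not_le.mpr h2),
              max_eq_right (le_trans h1 h2.le), max_eq_right (hD _ (hy i))]
          · push_neg at h1
            rw [if_neg (not_le.mpr (lt_of_lt_of_le h1 (le_max_left _ _))),
              if_neg (not_le.mpr h1), if_pos h2,
              max_eq_left (le_trans h2 h1.le), max_eq_left (hD _ (hx i))]
          · push_neg at h1 h2
            rw [if_neg (not_le.mpr (lt_of_lt_of_le h1 (le_max_left _ _))),
              if_neg (not_le.mpr h1), if_neg (not_le.mpr h2)]
        have em1 : (fun i => min (min (x i) (y i)) c)
            = (fun i => min (min (x i) c) (min (y i) c)) := funext fun i => min3R _ _ _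
        have eM1 : (fun i => min (max (x i) (y i)) c)
            = (fun i => max (min (x i) c) (min (y i) c)) :=
          funext fun i => min_max_distrib_right _ _ _
        have em2 : (fun i => if min (x i) (y i) ≤ c then 0 else min (x i) (y i))
            = (fun i => min (if x i ≤ c then 0 else x i) (if y i ≤ c then 0 else y i)) :=
          funext hm_if
        have eM2 : (fun i => if max (x i) (y i) ≤ c then 0 else max (x i) (y i))
            = (fun i => max (if x i ≤ c then 0 else x i) (if y i ≤ c then 0 else y i)) :=
          funext hM_if
        have em3 : (fun i => min (if min (x i) (y i) ≤ c then 0 else min (x i) (y i)) c)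
            = (fun i => min (min (if x i ≤ c then 0 else x i) c)
                (min (if y i ≤ c then 0 else y i) c)) :=
          funext fun i => by rw [hm_if i, min3R]
        have eM3 : (fun i => min (if max (x i) (y i) ≤ c then 0 else max (x i) (y i)) c)
            = (fun i => max (min (if x i ≤ c then 0 else x i) c)
                (min (if y i ≤ c then 0 else y i) c)) :=
          funext fun i => by rw [hM_if i, min_max_distrib_right]
        rw [em1, em2, em3] at Hm
        rw [eM1, eM2, eM3] at HM
        -- induction hypothesis
        have hco' : Comonotone (fun i => if x i ≤ c then 0 else x i)
            (fun i => if y i ≤ c then 0 else y i) := by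
          obtain ⟨σ, h1, h2⟩ := hco
          exact ⟨σ, mono_cut h1 c hcpos.le, mono_cut h2 c hcpos.le⟩
        have hsub1 : (Finset.univ.filter fun i => 0 < (if x i ≤ c then 0 else x i)) ⊆ A := by
          intro i hi
          simp only [Finset.mem_filter] at hi
          refine Finset.mem_filter.mpr ⟨Finset.mem_univ i, ?_⟩
          by_cases h : x i ≤ c
          · rw [if_pos h] at hi; exact absurd hi.2 (lt_irrefl 0)
          · exact lt_trans hcpos (not_le.mp h)
        have hsub2 : (Finset.univ.filter fun i => 0 < (if y i ≤ c then 0 else y i)) ⊆ B := by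
          intro i hi
          simp only [Finset.mem_filter] at hi
          refine Finset.mem_filter.mpr ⟨Finset.mem_univ i, ?_⟩
          by_cases h : y i ≤ c
          · rw [if_pos h] at hi; exact absurd hi.2 (lt_irrefl 0)
          · exact lt_trans hcpos (not_le.mp h)
        have hcard' : (Finset.univ.filter fun i => 0 < (if x i ≤ c then 0 else x i)).card
            + (Finset.univ.filter fun i => 0 < (if y i ≤ c then 0 else y i)).card ≤ N := by
          rcases hkey with ⟨hce, hposx⟩ | ⟨hce, hposy⟩
          · have hlt : (Finset.univ.filter fun i => 0 < (if x i ≤ c then 0 else x i)).card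
                < A.card := by
              refine Finset.card_lt_card ((Finset.ssubset_iff_of_subset hsub1).mpr
                ⟨i0, Finset.mem_filter.mpr ⟨Finset.mem_univ i0, hposx⟩, ?_⟩)
              simp only [Finset.mem_filter]
              rintro ⟨-, h⟩
              rw [if_pos (le_of_eq hce.symm)] at h
              exact lt_irrefl 0 h
            have hle2 := Finset.card_le_card hsub2
            omega
          · have hlt : (Finset.univ.filter fun i => 0 < (if y i ≤ c then 0 else y i)).card
                < B.card := by
              refine Finset.card_lt_card ((Finset.ssubset_iff_of_subset hsub2).mpr
                ⟨i0, Finset.mem_filter.mpr ⟨Finset.mem_univ i0, hposy⟩, ?_⟩)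
              simp only [Finset.mem_filter]
              rintro ⟨-, h⟩
              rw [if_pos (le_of_eq hce.symm)] at h
              exact lt_irrefl 0 h
            have hle1 := Finset.card_le_card hsub1
            omega
        have IH := ih (fun i => if x i ≤ c then 0 else x i)
          (fun i => if y i ≤ c then 0 else y i)
          (fun i => by
            show (if x i ≤ c then 0 else x i) ∈ D
            split_ifs with h
            · exact h0
            · exact hx i)
          (fun i => by
            show (if y i ≤ c then 0 else y i) ∈ D
            split_ifs with h
            · exact h0
            · exact hy i)
          hco' hcard'
        beta_reduce at IH
        -- bracket 1 : the tuples x ∧ c and y ∧ c are pointwise comparable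
        have B1 : f (fun i => min (x i) c) + f (fun i => min (y i) c)
            = f (fun i => min (min (x i) c) (min (y i) c))
              + f (fun i => max (min (x i) c) (min (y i) c)) := by
          rcases comon_nest hco 0 with hnest | hnest
          · have hle : ∀ i, min (x i) c ≤ min (y i) c := by
              intro i
              by_cases h : 0 < x i
              · rw [min_eq_right (hcx i h), min_eq_right (hcy i (hnest i h))]
              · have hx0 : x i = 0 := le_antisymm (not_lt.mp h) (hD _ (hx i))
                rw [hx0, min_eq_left hcpos.le]
                exact le_min (hD _ (hy i)) hcpos.le
            have := phi_of_le f hle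
            beta_reduce at this
            exact this
          · have hle : ∀ i, min (y i) c ≤ min (x i) c := by
              intro i
              by_cases h : 0 < y i
              · rw [min_eq_right (hcy i h), min_eq_right (hcx i (hnest i h))]
              · have hy0 : y i = 0 := le_antisymm (not_lt.mp h) (hD _ (hy i))
                rw [hy0, min_eq_left hcpos.le]
                exact le_min (hD _ (hx i)) hcpos.le
            have h3 := phi_of_le f hle
            beta_reduce at h3
            have e1 : (fun i => min (min (y i) c) (min (x i) c))
                = (fun i => min (min (x i) c) (min (y i) c)) := funext fun i => min_comm _ _
            have e2 : (fun i => max (min (y i) c) (min (x i) c))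
                = (fun i => max (min (x i) c) (min (y i) c)) := funext fun i => max_comm _ _
            rw [e1, e2] at h3
            linarith
        -- bracket 3
        have B3 : f (fun i => min (if x i ≤ c then 0 else x i) c)
              + f (fun i => min (if y i ≤ c then 0 else y i) c)
            = f (fun i => min (min (if x i ≤ c then 0 else x i) c)
                  (min (if y i ≤ c then 0 else y i) c))
              + f (fun i => max (min (if x i ≤ c then 0 else x i) c)
                  (min (if y i ≤ c then 0 else y i) c)) := by
          rcases comon_nest hco c with hnest | hnest
          · have hle : ∀ i, min (if x i ≤ c then 0 else x i) c
                ≤ min (if y i ≤ c then 0 else y i) c := by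
              intro i
              by_cases h : x i ≤ c
              · rw [if_pos h, min_eq_left hcpos.le]
                refine le_min ?_ hcpos.le
                split_ifs with h2
                · exact le_rfl
                · exact hD _ (hy i)
              · have hx2 : c < x i := not_le.mp h
                have hy2 : c < y i := hnest i hx2
                rw [if_neg h, if_neg (not_le.mpr hy2),
                  min_eq_right hx2.le, min_eq_right hy2.le]
            have := phi_of_le f hle
            beta_reduce at this
            exact this
          · have hle : ∀ i, min (if y i ≤ c then 0 else y i) c
                ≤ min (if x i ≤ c then 0 else x i) c := by
              intro i
              by_cases h : y i ≤ c
              · rw [if_pos h, min_eq_left hcpos.le]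
                refine le_min ?_ hcpos.le
                split_ifs with h2
                · exact le_rfl
                · exact hD _ (hx i)
              · have hy2 : c < y i := not_le.mp h
                have hx2 : c < x i := hnest i hy2
                rw [if_neg h, if_neg (not_le.mpr hx2),
                  min_eq_right hy2.le, min_eq_right hx2.le]
            have h3 := phi_of_le f hle
            beta_reduce at h3
            have e1 : (fun i => min (min (if y i ≤ c then 0 else y i) c)
                  (min (if x i ≤ c then 0 else x i) c))
                = (fun i => min (min (if x i ≤ c then 0 else x i) c)
                  (min (if y i ≤ c then 0 else y i) c)) := funext fun i => min_comm _ _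
            have e2 : (fun i => max (min (if y i ≤ c then 0 else y i) c)
                  (min (if x i ≤ c then 0 else x i) c))
                = (fun i => max (min (if x i ≤ c then 0 else x i) c)
                  (min (if y i ≤ c then 0 else y i) c)) := funext fun i => max_comm _ _
            rw [e1, e2] at h3
            linarith
        linarith
  intro x y hx hy hco
  exact main ((Finset.univ.filter fun i => 0 < x i).card
    + (Finset.univ.filter fun i => 0 < y i).card) x y hx hy hco le_rfl

private lemma invmax_to_modular {n : ℕ} {D : Set ℝ} (hD : ∀ r ∈ D, r ≤ 0)
    (h0 : (0:ℝ) ∈ D) {f : (Fin n → ℝ) → ℝ}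
    (hf : InvHMaxDiffOn D f) : ComonModularOn D f := by
  have hE0 : (0:ℝ) ∈ {r : ℝ | -r ∈ D} := by
    show -(0:ℝ) ∈ D
    rw [neg_zero]; exact h0
  have hEpos : ∀ r ∈ {r : ℝ | -r ∈ D}, 0 ≤ r := fun r hr => by
    have := hD _ hr; linarith
  have hg : InvHMinDiffOn {r : ℝ | -r ∈ D} (fun z => f (fun i => -z i)) := by
    intro z hz c hc
    have h1 := hf (fun i => -z i) (fun i => hz i) (-c) hc
    beta_reduce at h1
    show f (fun i => -z i) - f (fun i => -((fun i => min (z i) c) i))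
      = f (fun i => -((fun i => if z i ≤ c then 0 else z i) i))
        - f (fun i => -((fun i => min (if z i ≤ c then 0 else z i) c) i))
    beta_reduce
    have h_eb : ∀ i, -(if z i ≤ c then 0 else z i)
        = (if -c ≤ -z i then 0 else -z i) := by
      intro i
      by_cases h : z i ≤ c
      · rw [if_pos h, if_pos (neg_le_neg h), neg_zero]
      · rw [if_neg h, if_neg (fun hcon => h (le_of_neg_le_neg hcon))]
    have ea : (fun i => -min (z i) c) = (fun i => max (-z i) (-c)) :=
      funext fun i => (max_neg_neg _ _).symm
    have eb : (fun i => -(if z i ≤ c then 0 else z i))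
        = (fun i => if -c ≤ -z i then 0 else -z i) := funext h_eb
    have ec : (fun i => -min (if z i ≤ c then 0 else z i) c)
        = (fun i => max (if -c ≤ -z i then 0 else -z i) (-c)) := funext fun i => by
      rw [← max_neg_neg, h_eb i]
    rw [ea, eb, ec]
    exact h1
  have hmodE := invmin_to_modular hEpos hE0 hg
  intro x y hx hy hco
  have h2 := hmodE (fun i => -x i) (fun i => -y i)
    (fun i => by show -(-x i) ∈ D; rw [neg_neg]; exact hx i)
    (fun i => by show -(-y i) ∈ D; rw [neg_neg]; exact hy i)
    (comon_neg hco)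
  beta_reduce at h2
  have e0x : (fun i => -(-x i)) = x := funext fun i => neg_neg _
  have e0y : (fun i => -(-y i)) = y := funext fun i => neg_neg _
  have e3 : (fun i => -min (-x i) (-y i)) = (fun i => max (x i) (y i)) :=
    funext fun i => by rw [min_neg_neg, neg_neg]
  have e4 : (fun i => -max (-x i) (-y i)) = (fun i => min (x i) (y i)) :=
    funext fun i => by rw [max_neg_neg, neg_neg]
  rw [e0x, e0y, e3, e4] at h2
  linarith

private lemma b_to_a {n : ℕ} {I : Set ℝ} (h0I : (0:ℝ) ∈ I) {f : (Fin n → ℝ) → ℝ}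
    (hpos : ComonModularOn (I ∩ Set.Ici 0) f)
    (hneg : ComonModularOn (I ∩ Set.Iic 0) f)
    (hsplit : ∀ x : Fin n → ℝ, (∀ i, x i ∈ I) →
      f x + f (fun _ => 0) = f (fun i => max (x i) 0) + f (fun i => -max (-x i) 0)) :
    ComonModularOn I f := by
  have hsplit' : ∀ x : Fin n → ℝ, (∀ i, x i ∈ I) →
      f x + f (fun _ => 0) = f (fun i => max (x i) 0) + f (fun i => min (x i) 0) := by
    intro x hx
    have := hsplit x hx
    have e : (fun i => -max (-x i) 0) = (fun i => min (x i) 0) :=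
      funext fun i => negmaxR _
    rw [e] at this
    exact this
  intro x y hx hy hco
  obtain ⟨σ, hxσ, hyσ⟩ := hco
  have memp : ∀ z : Fin n → ℝ, (∀ i, z i ∈ I) → ∀ i, max (z i) 0 ∈ I ∩ Set.Ici 0 := by
    intro z hz i
    rcases le_total (z i) 0 with h | h
    · rw [max_eq_right h]; exact ⟨h0I, Set.mem_Ici.mpr le_rfl⟩
    · rw [max_eq_left h]; exact ⟨hz i, h⟩
  have memm : ∀ z : Fin n → ℝ, (∀ i, z i ∈ I) → ∀ i, min (z i) 0 ∈ I ∩ Set.Iic 0 := by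
    intro z hz i
    rcases le_total (z i) 0 with h | h
    · rw [min_eq_left h]; exact ⟨hz i, h⟩
    · rw [min_eq_right h]; exact ⟨h0I, Set.mem_Iic.mpr le_rfl⟩
  have hxm : ∀ i, min (x i) (y i) ∈ I := fun i => by
    rcases le_total (x i) (y i) with h | h
    · rw [min_eq_left h]; exact hx i
    · rw [min_eq_right h]; exact hy i
  have hxM : ∀ i, max (x i) (y i) ∈ I := fun i => by
    rcases le_total (x i) (y i) with h | h
    · rw [max_eq_right h]; exact hy i
    · rw [max_eq_left h]; exact hx i
  have Sx := hsplit' x hx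
  have Sy := hsplit' y hy
  have Sm := hsplit' (fun i => min (x i) (y i)) hxm
  have SM := hsplit' (fun i => max (x i) (y i)) hxM
  beta_reduce at Sm SM
  have Pp := hpos (fun i => max (x i) 0) (fun i => max (y i) 0)
    (memp x hx) (memp y hy)
    ⟨σ, fun a b hab => max_le_max (hxσ hab) le_rfl,
      fun a b hab => max_le_max (hyσ hab) le_rfl⟩
  have Pm := hneg (fun i => min (x i) 0) (fun i => min (y i) 0)
    (memm x hx) (memm y hy)
    ⟨σ, fun a b hab => min_le_min (hxσ hab) le_rfl,
      fun a b hab => min_le_min (hyσ hab) le_rfl⟩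
  beta_reduce at Pp Pm
  have e1 : (fun i => max (min (x i) (y i)) 0)
      = (fun i => min (max (x i) 0) (max (y i) 0)) :=
    funext fun i => max_min_distrib_right _ _ _
  have e2 : (fun i => min (min (x i) (y i)) 0)
      = (fun i => min (min (x i) 0) (min (y i) 0)) := funext fun i => min3R _ _ _
  have e3 : (fun i => max (max (x i) (y i)) 0)
      = (fun i => max (max (x i) 0) (max (y i) 0)) := funext fun i => max3R _ _ _
  have e4 : (fun i => min (max (x i) (y i)) 0)
      = (fun i => max (min (x i) 0) (min (y i) 0)) :=
    funext fun i => min_max_distrib_right _ _ _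
  rw [e1, e2] at Sm
  rw [e3, e4] at SM
  linarith

private lemma split_of_modular {n : ℕ} {I : Set ℝ} (h0I : (0:ℝ) ∈ I)
    {f : (Fin n → ℝ) → ℝ} (hmod : ComonModularOn I f) :
    ∀ x : Fin n → ℝ, (∀ i, x i ∈ I) →
      f x + f (fun _ => 0) = f (fun i => max (x i) 0) + f (fun i => -max (-x i) 0) := by
  intro x hx
  have h1 := hmod x (fun _ => 0) hx (fun _ => h0I) (comon_zero x)
  beta_reduce at h1
  have e : (fun i => -max (-x i) 0) = (fun i => min (x i) 0) :=
    funext fun i => negmaxR _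
  rw [e]
  linarith


theorem statement9 (n : ℕ) (hn : 0 < n) (I : Set ℝ) (hI : I.OrdConnected)
    (hInt : ∃ a b : ℝ, a ∈ I ∧ b ∈ I ∧ a < b) (h0I : (0 : ℝ) ∈ I)
    (f : (Fin n → ℝ) → ℝ) :
    (ComonModularOn I f ↔
      (ComonModularOn (I ∩ Set.Ici 0) f ∧ ComonModularOn (I ∩ Set.Iic 0) f ∧
        ∀ x : Fin n → ℝ, (∀ i, x i ∈ I) →
          f x + f (fun _ => 0) = f (fun i => max (x i) 0) + f (fun i => -max (-x i) 0)))
    ∧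
    (ComonModularOn I f ↔
      (InvHMinDiffOn (I ∩ Set.Ici 0) f ∧ InvHMaxDiffOn (I ∩ Set.Iic 0) f ∧
        ∀ x : Fin n → ℝ, (∀ i, x i ∈ I) →
          f x + f (fun _ => 0) = f (fun i => max (x i) 0) + f (fun i => -max (-x i) 0))) := by
  have hDpos : ∀ r ∈ I ∩ Set.Ici 0, (0:ℝ) ≤ r := fun r hr => hr.2
  have hDneg : ∀ r ∈ I ∩ Set.Iic 0, r ≤ (0:ℝ) := fun r hr => hr.2
  have h0pos : (0:ℝ) ∈ I ∩ Set.Ici 0 := ⟨h0I, Set.mem_Ici.mpr le_rfl⟩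
  have h0neg : (0:ℝ) ∈ I ∩ Set.Iic 0 := ⟨h0I, Set.mem_Iic.mpr le_rfl⟩
  constructor
  · constructor
    · intro hmod
      exact ⟨cm_mono hmod Set.inter_subset_left, cm_mono hmod Set.inter_subset_left,
        split_of_modular h0I hmod⟩
    · rintro ⟨hpos, hneg, hsplit⟩
      exact b_to_a h0I hpos hneg hsplit
  · constructor
    · intro hmod
      exact ⟨modular_to_invmin hDpos h0pos (cm_mono hmod Set.inter_subset_left),
        modular_to_invmax hDneg h0neg (cm_mono hmod Set.inter_subset_left),
        split_of_modular h0I hmod⟩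
    · rintro ⟨hmin, hmax, hsplit⟩
      exact b_to_a h0I (invmin_to_modular hDpos h0pos hmin)
        (invmax_to_modular hDneg h0neg hmax) hsplit
end

section
/- Assume 0 ∈ I. A function f : Iⁿ → ℝ is comonotonically modular if and only if for every permutation σ of X and every x ∈ Iⁿ_σ, letting p ∈ {0,…,n} be determined by x_{σ(p)} < 0 ≤ x_{σ(p+1)} (with conventions x_{σ(0)} = −∞ and x_{σ(n+1)} = +∞), one has f(x) = f(0) + Σ_{i=1}^p ( f(x_{σ(i)}·1_{S↓_σ(i)}) − f(x_{σ(i)}·1_{S↓_σ(i−1)}) ) + Σ_{i=p+1}^n ( f(x_{σ(i)}·1_{S↑_σ(i)}) − f(x_{σ(i)}·1_{S↑_σ(i+1)}) ). -/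
section Helpers

lemma indTuple_zero {n : ℕ} (S : Finset (Fin n)) : indTuple S (0:ℝ) = fun _ => 0 := by
  funext j; simp [indTuple]

lemma indTuple_empty {n : ℕ} (r : ℝ) : indTuple (∅ : Finset (Fin n)) r = fun _ => 0 := by
  funext j; simp [indTuple]

lemma mem_SUp {n : ℕ} (σ : Equiv.Perm (Fin n)) (k : ℕ) (i : Fin n) :
    σ i ∈ SUp σ k ↔ k ≤ (i : ℕ) := by simp [SUp]

lemma mem_SDown {n : ℕ} (σ : Equiv.Perm (Fin n)) (k : ℕ) (i : Fin n) :
    σ i ∈ SDown σ k ↔ (i : ℕ) < k := by simp [SDown]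

lemma SUp_n {n : ℕ} (σ : Equiv.Perm (Fin n)) : SUp σ n = ∅ := by
  simp [SUp, Finset.filter_eq_empty_iff]

lemma SDown_zero {n : ℕ} (σ : Equiv.Perm (Fin n)) : SDown σ 0 = ∅ := by
  simp [SDown, Finset.filter_eq_empty_iff]

lemma card_filter_lt {n : ℕ} (m : ℕ) (hm : m ≤ n) :
    (Finset.univ.filter (fun j : Fin n => (j : ℕ) < m)).card = m := by
  have himg : (Finset.univ.filter (fun j : Fin n => (j : ℕ) < m)).image Fin.val
      = Finset.range m := by
    ext a
    simp only [Finset.mem_image, Finset.mem_filter, Finset.mem_univ, true_and, Finset.mem_range]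
    constructor
    · rintro ⟨j, hj, rfl⟩; exact hj
    · intro ha; exact ⟨⟨a, lt_of_lt_of_le ha hm⟩, ha, rfl⟩
  rw [← Finset.card_image_of_injective _ Fin.val_injective, himg, Finset.card_range]

lemma indTuple_mem {n : ℕ} {I : Set ℝ} (h0 : (0:ℝ) ∈ I) {r : ℝ} (hr : r ∈ I)
    (S : Finset (Fin n)) : ∀ j, indTuple S r j ∈ I := by
  intro j; unfold indTuple; split <;> assumption

lemma min_mem' {I : Set ℝ} {a b : ℝ} (ha : a ∈ I) (hb : b ∈ I) : min a b ∈ I := by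
  rcases le_total a b with h | h
  · rwa [min_eq_left h]
  · rwa [min_eq_right h]

lemma max_mem' {I : Set ℝ} {a b : ℝ} (ha : a ∈ I) (hb : b ∈ I) : max a b ∈ I := by
  rcases le_total a b with h | h
  · rwa [max_eq_right h]
  · rwa [max_eq_left h]

end Helpers

lemma pos_formula {n : ℕ} {I : Set ℝ} (h0I : (0:ℝ) ∈ I) {f : (Fin n → ℝ) → ℝ}
    (hf : ComonModularOn I f) (σ : Equiv.Perm (Fin n)) (y : Fin n → ℝ)
    (hy : ∀ i, y i ∈ I) (hpos : ∀ i, 0 ≤ y i) (hmono : Monotone (y ∘ σ)) :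
    f y = f (fun _ => 0)
      + ∑ i : Fin n, (f (indTuple (SUp σ (i : ℕ)) (y (σ i)))
          - f (indTuple (SUp σ ((i : ℕ) + 1)) (y (σ i)))) := by
  classical
  rcases Nat.eq_zero_or_pos n with hn | hn
  · subst hn
    have hy0 : y = fun _ => 0 := funext fun j => j.elim0
    simp [hy0]
  set Y : ℕ → ℝ := fun k => if h : k < n then y (σ ⟨k, h⟩) else 0 with hYdef
  set P : ℕ → ℝ := fun k => if k = 0 then 0 else Y (k - 1) with hPdef
  have hYval : ∀ i : Fin n, Y (i : ℕ) = y (σ i) := by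
    intro i; simp [hYdef, i.isLt]
  have hYnn : ∀ k, 0 ≤ Y k := by
    intro k
    by_cases h : k < n
    · simp only [hYdef, dif_pos h]; exact hpos _
    · simp only [hYdef, dif_neg h]; exact le_rfl
  have hPnn : ∀ k, 0 ≤ P k := by
    intro k
    by_cases h : k = 0
    · simp only [hPdef, if_pos h]; exact le_rfl
    · simp only [hPdef, if_neg h]; exact hYnn _
  have hYI : ∀ k, Y k ∈ I := by
    intro k
    by_cases h : k < n
    · simp only [hYdef, dif_pos h]; exact hy _
    · simp only [hYdef, dif_neg h]; exact h0I
  have hPI : ∀ k, P k ∈ I := by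
    intro k
    by_cases h : k = 0
    · simp only [hPdef, if_pos h]; exact h0I
    · simp only [hPdef, if_neg h]; exact hYI _
  have hYmono : ∀ a b : ℕ, a ≤ b → b < n → Y a ≤ Y b := by
    intro a b hab hb
    have ha : a < n := lt_of_le_of_lt hab hb
    simp only [hYdef, dif_pos ha, dif_pos hb]
    exact hmono (show (⟨a, ha⟩ : Fin n) ≤ ⟨b, hb⟩ from hab)
  have hPleY : ∀ k, k < n → P k ≤ Y k := by
    intro k hk
    rcases Nat.eq_zero_or_pos k with h | h
    · subst h; simpa [hPdef] using hYnn 0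
    · have hk0 : k ≠ 0 := h.ne'
      have : P k = Y (k - 1) := by simp only [hPdef, if_neg hk0]
      rw [this]
      exact hYmono (k - 1) k (Nat.sub_le k 1) hk
  -- key modular step
  have key : ∀ k, k < n →
      f (indTuple (SUp σ k) (Y k)) + f (fun j => min (y j) (P k))
        = f (indTuple (SUp σ k) (P k)) + f (fun j => min (y j) (P (k + 1))) := by
    intro k hk
    have hu : ∀ j, indTuple (SUp σ k) (Y k) j ∈ I := indTuple_mem h0I (hYI k) _
    have hv : ∀ j, min (y j) (P k) ∈ I := fun j => min_mem' (hy j) (hPI k)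
    have hcom : Comonotone (indTuple (SUp σ k) (Y k)) (fun j => min (y j) (P k)) := by
      refine ⟨σ, ?_, ?_⟩
      · intro a b hab
        have hab' : (a : ℕ) ≤ (b : ℕ) := hab
        simp only [Function.comp_apply, indTuple, mem_SUp]
        by_cases ha : k ≤ (a : ℕ)
        · rw [if_pos ha, if_pos (le_trans ha hab')]
        · rw [if_neg ha]
          split
          · exact hYnn k
          · exact le_refl _
      · intro a b hab
        exact min_le_min (hmono hab) le_rfl
    have hmod := hf _ _ hu hv hcom
    beta_reduce at hmod
    have hmin : (fun j => min (indTuple (SUp σ k) (Y k) j) (min (y j) (P k)))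
        = indTuple (SUp σ k) (P k) := by
      funext j
      obtain ⟨i, rfl⟩ : ∃ i, σ i = j := ⟨σ.symm j, σ.apply_symm_apply j⟩
      simp only [indTuple, mem_SUp, hYval]
      by_cases hik : k ≤ (i : ℕ)
      · rw [if_pos hik, if_pos hik, ← hYval]
        have h1 : P k ≤ Y (i : ℕ) := le_trans (hPleY k hk) (hYmono k i hik i.isLt)
        rw [min_eq_right h1, min_eq_right (hPleY k hk)]
      · rw [if_neg hik, if_neg hik]
        exact min_eq_left (le_min (hpos _) (hPnn k))
    have hmax : (fun j => max (indTuple (SUp σ k) (Y k) j) (min (y j) (P k)))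
        = (fun j => min (y j) (P (k + 1))) := by
      funext j
      obtain ⟨i, rfl⟩ : ∃ i, σ i = j := ⟨σ.symm j, σ.apply_symm_apply j⟩
      have hPk1 : P (k + 1) = Y k := by simp [hPdef]
      simp only [indTuple, mem_SUp, hPk1]
      by_cases hik : k ≤ (i : ℕ)
      · rw [if_pos hik]
        have h1 : P k ≤ Y (i:ℕ) := le_trans (hPleY k hk) (hYmono k i hik i.isLt)
        have h2 : Y k ≤ Y (i:ℕ) := hYmono k i hik i.isLt
        rw [← hYval, min_eq_right h1, max_eq_left (hPleY k hk), min_eq_right h2]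
      · rw [if_neg hik]
        push_neg at hik
        have hk0 : k ≠ 0 := by omega
        have hYiPk : Y (i:ℕ) ≤ P k := by
          have : P k = Y (k-1) := by simp [hPdef, hk0]
          rw [this]
          exact hYmono i (k-1) (by omega) (by omega)
        have hYik : Y (i:ℕ) ≤ Y k := hYmono i k (le_of_lt hik) hk
        rw [← hYval, min_eq_left hYiPk, max_eq_right (hYnn _), min_eq_left hYik]
    rw [hmin, hmax] at hmod
    linarith
  -- induction
  have main : ∀ k, k ≤ n → f (fun j => min (y j) (P k))
      = f (fun _ => 0) + ∑ i ∈ Finset.range k,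
          (f (indTuple (SUp σ i) (Y i)) - f (indTuple (SUp σ i) (P i))) := by
    intro k
    induction k with
    | zero =>
      intro _
      have h1 : (fun j => min (y j) (P 0)) = fun _ => (0:ℝ) := by
        funext j; simp [hPdef, min_eq_right (hpos j)]
      rw [h1]; simp
    | succ k ih =>
      intro hk1
      have hk : k < n := hk1
      rw [Finset.sum_range_succ, ← add_assoc, ← ih hk.le]
      have := key k hk
      linarith
  have hWn : (fun j => min (y j) (P n)) = y := by
    funext j
    refine min_eq_left ?_
    have hj : y j = Y ((σ.symm j : Fin n) : ℕ) := by
      rw [hYval]; simp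
    rw [hj, hPdef]
    have hn0 : n ≠ 0 := hn.ne'
    simp only [hn0, if_false]
    exact hYmono _ (n - 1) (by have := (σ.symm j).isLt; omega) (by omega)
  have hmain := main n le_rfl
  rw [hWn] at hmain
  -- telescoping conversion
  have hshift : ∀ i : ℕ, P (i + 1) = Y i := fun i => by simp [hPdef]
  have htele : ∑ i ∈ Finset.range n,
      (f (indTuple (SUp σ (i+1)) (Y i)) - f (indTuple (SUp σ i) (P i))) = 0 := by
    have hs := Finset.sum_range_sub (fun i => f (indTuple (SUp σ i) (P i))) n
    have h1 : ∑ i ∈ Finset.range n,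
        (f (indTuple (SUp σ (i+1)) (Y i)) - f (indTuple (SUp σ i) (P i)))
        = ∑ i ∈ Finset.range n,
          (f (indTuple (SUp σ (i+1)) (P (i+1))) - f (indTuple (SUp σ i) (P i))) := by
      refine Finset.sum_congr rfl fun i _ => by rw [hshift]
    rw [h1, hs, SUp_n, indTuple_empty]
    have hP0 : P 0 = 0 := by simp [hPdef]
    rw [hP0, indTuple_zero, sub_self]
  have hsum : ∑ i ∈ Finset.range n,
      (f (indTuple (SUp σ i) (Y i)) - f (indTuple (SUp σ i) (P i)))
      = ∑ i ∈ Finset.range n,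
        (f (indTuple (SUp σ i) (Y i)) - f (indTuple (SUp σ (i+1)) (Y i))) := by
    rw [← sub_eq_zero, ← Finset.sum_sub_distrib]
    rw [← htele]
    exact Finset.sum_congr rfl fun i _ => by ring
  rw [hsum] at hmain
  rw [hmain]
  congr 1
  rw [← Fin.sum_univ_eq_sum_range
    (fun i => f (indTuple (SUp σ i) (Y i)) - f (indTuple (SUp σ (i+1)) (Y i))) n]
  exact Finset.sum_congr rfl fun i _ => by rw [hYval]


lemma neg_formula {n : ℕ} {I : Set ℝ} (h0I : (0:ℝ) ∈ I) {f : (Fin n → ℝ) → ℝ}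
    (hf : ComonModularOn I f) (σ : Equiv.Perm (Fin n)) (y : Fin n → ℝ)
    (hy : ∀ i, y i ∈ I) (hneg : ∀ i, y i ≤ 0) (hmono : Monotone (y ∘ σ)) :
    f y = f (fun _ => 0)
      + ∑ i : Fin n, (f (indTuple (SDown σ ((i : ℕ) + 1)) (y (σ i)))
          - f (indTuple (SDown σ (i : ℕ)) (y (σ i)))) := by
  classical
  rcases Nat.eq_zero_or_pos n with hn | hn
  · subst hn
    have hy0 : y = fun _ => 0 := funext fun j => j.elim0
    simp [hy0]
  set Y : ℕ → ℝ := fun k => if h : k < n then y (σ ⟨k, h⟩) else 0 with hYdef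
  have hYval : ∀ i : Fin n, Y (i : ℕ) = y (σ i) := by
    intro i; simp [hYdef, i.isLt]
  have hYnp : ∀ k, Y k ≤ 0 := by
    intro k
    by_cases h : k < n
    · simp only [hYdef, dif_pos h]; exact hneg _
    · simp only [hYdef, dif_neg h]; exact le_rfl
  have hYI : ∀ k, Y k ∈ I := by
    intro k
    by_cases h : k < n
    · simp only [hYdef, dif_pos h]; exact hy _
    · simp only [hYdef, dif_neg h]; exact h0I
  have hYmono : ∀ a b : ℕ, a ≤ b → b ≤ n → Y a ≤ Y b := by
    intro a b hab hb
    by_cases hbn : b < n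
    · have ha : a < n := lt_of_le_of_lt hab hbn
      simp only [hYdef, dif_pos ha, dif_pos hbn]
      exact hmono (show (⟨a, ha⟩ : Fin n) ≤ ⟨b, hbn⟩ from hab)
    · simp only [hYdef, dif_neg hbn]
      exact hYnp a
  have key : ∀ k, k < n →
      f (indTuple (SDown σ (k + 1)) (Y k)) + f (fun j => max (y j) (Y (k + 1)))
        = f (fun j => max (y j) (Y k)) + f (indTuple (SDown σ (k + 1)) (Y (k + 1))) := by
    intro k hk
    have hu : ∀ j, indTuple (SDown σ (k + 1)) (Y k) j ∈ I := indTuple_mem h0I (hYI k) _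
    have hv : ∀ j, max (y j) (Y (k + 1)) ∈ I := fun j => max_mem' (hy j) (hYI (k + 1))
    have hcom : Comonotone (indTuple (SDown σ (k + 1)) (Y k)) (fun j => max (y j) (Y (k + 1))) := by
      refine ⟨σ, ?_, ?_⟩
      · intro a b hab
        have hab' : (a : ℕ) ≤ (b : ℕ) := hab
        simp only [Function.comp_apply, indTuple, mem_SDown]
        by_cases hb : (b : ℕ) < k + 1
        · rw [if_pos hb, if_pos (lt_of_le_of_lt hab' hb)]
        · rw [if_neg hb]
          split
          · exact hYnp k
          · exact le_rfl
      · intro a b hab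
        exact max_le_max (hmono hab) le_rfl
    have hmod := hf _ _ hu hv hcom
    beta_reduce at hmod
    have hkk1 : Y k ≤ Y (k + 1) := hYmono k (k + 1) (Nat.le_succ k) hk
    have hmin : (fun j => min (indTuple (SDown σ (k + 1)) (Y k) j) (max (y j) (Y (k + 1))))
        = (fun j => max (y j) (Y k)) := by
      funext j
      obtain ⟨i, rfl⟩ : ∃ i, σ i = j := ⟨σ.symm j, σ.apply_symm_apply j⟩
      simp only [indTuple, mem_SDown]
      by_cases hik : (i : ℕ) < k + 1
      · rw [if_pos hik]
        have hik' : Y (i : ℕ) ≤ Y k := hYmono i k (by omega) hk.le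
        rw [← hYval, max_eq_right (le_trans hik' hkk1), min_eq_left hkk1,
          max_eq_right hik']
      · rw [if_neg hik]
        have h1 : Y (k + 1) ≤ Y (i : ℕ) := hYmono (k + 1) i (by omega) i.isLt.le
        have h2 : Y k ≤ Y (i : ℕ) := le_trans hkk1 h1
        rw [← hYval, max_eq_left h1, min_eq_right (by rw [hYval]; exact hneg _),
          max_eq_left h2]
    have hmax : (fun j => max (indTuple (SDown σ (k + 1)) (Y k) j) (max (y j) (Y (k + 1))))
        = indTuple (SDown σ (k + 1)) (Y (k + 1)) := by
      funext j
      obtain ⟨i, rfl⟩ : ∃ i, σ i = j := ⟨σ.symm j, σ.apply_symm_apply j⟩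
      simp only [indTuple, mem_SDown]
      by_cases hik : (i : ℕ) < k + 1
      · rw [if_pos hik, if_pos hik]
        have hik' : Y (i : ℕ) ≤ Y (k + 1) :=
          hYmono i (k + 1) (by omega) (by omega)
        rw [← hYval, max_eq_right hik', max_eq_right hkk1]
      · rw [if_neg hik, if_neg hik]
        have h1 : Y (k + 1) ≤ Y (i : ℕ) := hYmono (k + 1) i (by omega) i.isLt.le
        rw [← hYval, max_eq_left h1, max_eq_left (by rw [hYval]; exact hneg _)]
    rw [hmin, hmax] at hmod
    linarith
  have main : ∀ m k, k + m = n → f (fun j => max (y j) (Y k))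
      = f (fun _ => 0) + ∑ i ∈ Finset.Ico k n,
          (f (indTuple (SDown σ (i + 1)) (Y i)) - f (indTuple (SDown σ (i + 1)) (Y (i + 1)))) := by
    intro m
    induction m with
    | zero =>
      intro k hk
      have hkn : k = n := by omega
      subst hkn
      have hYn : Y k = 0 := by simp [hYdef]
      have h1 : (fun j => max (y j) (Y k)) = fun _ => (0:ℝ) := by
        funext j; rw [hYn]; exact max_eq_right (hneg j)
      rw [h1]; simp
    | succ m ih =>
      intro k hk
      have hkn : k < n := by omega
      rw [Finset.sum_eq_sum_Ico_succ_bot hkn]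
      have hih := ih (k + 1) (by omega)
      have hkey := key k hkn
      linarith
  have hV0 : (fun j => max (y j) (Y 0)) = y := by
    funext j
    refine max_eq_left ?_
    have hj : y j = Y ((σ.symm j : Fin n) : ℕ) := by rw [hYval]; simp
    rw [hj]
    exact hYmono 0 _ (Nat.zero_le _) (σ.symm j).isLt.le
  have hmain := main n 0 (by omega)
  rw [hV0, ← Finset.range_eq_Ico] at hmain
  have htele : ∑ i ∈ Finset.range n,
      ((f (indTuple (SDown σ (i + 1)) (Y i)) - f (indTuple (SDown σ (i + 1)) (Y (i + 1))))
        - (f (indTuple (SDown σ (i + 1)) (Y i)) - f (indTuple (SDown σ i) (Y i)))) = 0 := by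
    have hs := Finset.sum_range_sub' (fun i => f (indTuple (SDown σ i) (Y i))) n
    have h1 : ∑ i ∈ Finset.range n,
        ((f (indTuple (SDown σ (i + 1)) (Y i)) - f (indTuple (SDown σ (i + 1)) (Y (i + 1))))
          - (f (indTuple (SDown σ (i + 1)) (Y i)) - f (indTuple (SDown σ i) (Y i))))
        = ∑ i ∈ Finset.range n,
          (f (indTuple (SDown σ i) (Y i)) - f (indTuple (SDown σ (i + 1)) (Y (i + 1)))) := by
      refine Finset.sum_congr rfl fun i _ => by ring
    rw [h1, hs, SDown_zero, indTuple_empty]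
    have hYn : Y n = 0 := by simp [hYdef]
    rw [hYn, indTuple_zero, sub_self]
  have hsum : ∑ i ∈ Finset.range n,
      (f (indTuple (SDown σ (i + 1)) (Y i)) - f (indTuple (SDown σ (i + 1)) (Y (i + 1))))
      = ∑ i ∈ Finset.range n,
        (f (indTuple (SDown σ (i + 1)) (Y i)) - f (indTuple (SDown σ i) (Y i))) := by
    rw [← sub_eq_zero, ← Finset.sum_sub_distrib]
    exact htele
  rw [hsum] at hmain
  rw [hmain]
  congr 1
  rw [← Fin.sum_univ_eq_sum_range
    (fun i => f (indTuple (SDown σ (i + 1)) (Y i)) - f (indTuple (SDown σ i) (Y i))) n]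
  exact Finset.sum_congr rfl fun i _ => by rw [hYval]


theorem statement10 (n : ℕ) (hn : 0 < n) (I : Set ℝ) (hI : I.OrdConnected)
    (hInt : ∃ a b : ℝ, a ∈ I ∧ b ∈ I ∧ a < b) (h0I : (0 : ℝ) ∈ I)
    (f : (Fin n → ℝ) → ℝ) :
    ComonModularOn I f ↔
      ∀ σ : Equiv.Perm (Fin n), ∀ x : Fin n → ℝ, (∀ i, x i ∈ I) → Monotone (x ∘ σ) →
        ∀ p : ℕ, p ≤ n → (∀ i : Fin n, (i : ℕ) < p → x (σ i) < 0) →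
          (∀ i : Fin n, p ≤ (i : ℕ) → 0 ≤ x (σ i)) →
          f x = f (fun _ => 0)
            + (∑ i ∈ Finset.univ.filter (fun i : Fin n => (i : ℕ) < p),
                (f (indTuple (SDown σ ((i : ℕ) + 1)) (x (σ i)))
                  - f (indTuple (SDown σ (i : ℕ)) (x (σ i)))))
            + ∑ i ∈ Finset.univ.filter (fun i : Fin n => p ≤ (i : ℕ)),
                (f (indTuple (SUp σ (i : ℕ)) (x (σ i)))
                  - f (indTuple (SUp σ ((i : ℕ) + 1)) (x (σ i)))) := by
  classical
  constructor
  · -- forward direction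
    intro hf σ x hx hmx p hpn hnegp hposp
    have hxmI : ∀ i, min (x i) 0 ∈ I := fun i => min_mem' (hx i) h0I
    have hxpI : ∀ i, max (x i) 0 ∈ I := fun i => max_mem' (hx i) h0I
    have hsplit : f x + f (fun _ => 0)
        = f (fun i => min (x i) 0) + f (fun i => max (x i) 0) := by
      have h := hf x (fun _ => 0) hx (fun _ => h0I) ⟨σ, hmx, monotone_const⟩
      exact h
    have hposform := pos_formula h0I hf σ (fun i => max (x i) 0) hxpI
      (fun i => le_max_right _ _) (fun a b hab => max_le_max (hmx hab) le_rfl)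
    have hnegform := neg_formula h0I hf σ (fun i => min (x i) 0) hxmI
      (fun i => min_le_right _ _) (fun a b hab => min_le_min (hmx hab) le_rfl)
    have hup : ∑ i : Fin n,
        (f (indTuple (SUp σ (i : ℕ)) ((fun i => max (x i) 0) (σ i)))
          - f (indTuple (SUp σ ((i : ℕ) + 1)) ((fun i => max (x i) 0) (σ i))))
        = ∑ i ∈ Finset.univ.filter (fun i : Fin n => p ≤ (i : ℕ)),
            (f (indTuple (SUp σ (i : ℕ)) (x (σ i)))
              - f (indTuple (SUp σ ((i : ℕ) + 1)) (x (σ i)))) := by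
      rw [← Finset.sum_filter_add_sum_filter_not Finset.univ (fun i : Fin n => p ≤ (i : ℕ))]
      have h2 : ∑ i ∈ Finset.univ.filter (fun i : Fin n => ¬ p ≤ (i : ℕ)),
          (f (indTuple (SUp σ (i : ℕ)) ((fun i => max (x i) 0) (σ i)))
            - f (indTuple (SUp σ ((i : ℕ) + 1)) ((fun i => max (x i) 0) (σ i)))) = 0 := by
        refine Finset.sum_eq_zero fun i hi => ?_
        have hip : (i : ℕ) < p := by
          have := (Finset.mem_filter.mp hi).2
          omega
        have hneg : x (σ i) < 0 := hnegp i hip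
        have hm0 : (fun i => max (x i) 0) (σ i) = 0 := max_eq_right hneg.le
        rw [hm0, indTuple_zero, indTuple_zero, sub_self]
      have h1 : ∑ i ∈ Finset.univ.filter (fun i : Fin n => p ≤ (i : ℕ)),
          (f (indTuple (SUp σ (i : ℕ)) ((fun i => max (x i) 0) (σ i)))
            - f (indTuple (SUp σ ((i : ℕ) + 1)) ((fun i => max (x i) 0) (σ i))))
          = ∑ i ∈ Finset.univ.filter (fun i : Fin n => p ≤ (i : ℕ)),
            (f (indTuple (SUp σ (i : ℕ)) (x (σ i)))
              - f (indTuple (SUp σ ((i : ℕ) + 1)) (x (σ i)))) := by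
        refine Finset.sum_congr rfl fun i hi => ?_
        have := hposp i (Finset.mem_filter.mp hi).2
        rw [show (fun i => max (x i) 0) (σ i) = x (σ i) from max_eq_left this]
      rw [h1, h2, add_zero]
    have hdown : ∑ i : Fin n,
        (f (indTuple (SDown σ ((i : ℕ) + 1)) ((fun i => min (x i) 0) (σ i)))
          - f (indTuple (SDown σ (i : ℕ)) ((fun i => min (x i) 0) (σ i))))
        = ∑ i ∈ Finset.univ.filter (fun i : Fin n => (i : ℕ) < p),
            (f (indTuple (SDown σ ((i : ℕ) + 1)) (x (σ i)))
              - f (indTuple (SDown σ (i : ℕ)) (x (σ i)))) := by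
      rw [← Finset.sum_filter_add_sum_filter_not Finset.univ (fun i : Fin n => (i : ℕ) < p)]
      have h2 : ∑ i ∈ Finset.univ.filter (fun i : Fin n => ¬ (i : ℕ) < p),
          (f (indTuple (SDown σ ((i : ℕ) + 1)) ((fun i => min (x i) 0) (σ i)))
            - f (indTuple (SDown σ (i : ℕ)) ((fun i => min (x i) 0) (σ i)))) = 0 := by
        refine Finset.sum_eq_zero fun i hi => ?_
        have hip : p ≤ (i : ℕ) := by
          have := (Finset.mem_filter.mp hi).2
          omega
        have hnn : 0 ≤ x (σ i) := hposp i hip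
        have hm0 : (fun i => min (x i) 0) (σ i) = 0 := min_eq_right hnn
        rw [hm0, indTuple_zero, indTuple_zero, sub_self]
      have h1 : ∑ i ∈ Finset.univ.filter (fun i : Fin n => (i : ℕ) < p),
          (f (indTuple (SDown σ ((i : ℕ) + 1)) ((fun i => min (x i) 0) (σ i)))
            - f (indTuple (SDown σ (i : ℕ)) ((fun i => min (x i) 0) (σ i))))
          = ∑ i ∈ Finset.univ.filter (fun i : Fin n => (i : ℕ) < p),
            (f (indTuple (SDown σ ((i : ℕ) + 1)) (x (σ i)))
              - f (indTuple (SDown σ (i : ℕ)) (x (σ i)))) := by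
        refine Finset.sum_congr rfl fun i hi => ?_
        have := hnegp i (Finset.mem_filter.mp hi).2
        rw [show (fun i => min (x i) 0) (σ i) = x (σ i) from min_eq_left this.le]
      rw [h1, h2, add_zero]
    rw [hup] at hposform
    rw [hdown] at hnegform
    linarith
  · -- backward direction
    intro hform x y hx hy hcom
    obtain ⟨σ, hxm, hym⟩ := hcom
    set t : ℝ → ℕ → ℝ := fun r k =>
      if r < 0 then f (indTuple (SDown σ (k + 1)) r) - f (indTuple (SDown σ k) r)
      else f (indTuple (SUp σ k) r) - f (indTuple (SUp σ (k + 1)) r) with htdef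
    have general : ∀ z : Fin n → ℝ, (∀ i, z i ∈ I) → Monotone (z ∘ σ) →
        f z = f (fun _ => 0) + ∑ i : Fin n, t (z (σ i)) (i : ℕ) := by
      intro z hz hzm
      set p := (Finset.univ.filter (fun i : Fin n => z (σ i) < 0)).card with hp
      have hpn : p ≤ n := le_trans (Finset.card_filter_le _ _) (by simp)
      have hA : ∀ i : Fin n, (i : ℕ) < p → z (σ i) < 0 := by
        intro i hi
        by_contra hcon
        push_neg at hcon
        have hsub : Finset.univ.filter (fun j : Fin n => z (σ j) < 0)
            ⊆ Finset.univ.filter (fun j : Fin n => (j : ℕ) < (i : ℕ)) := by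
          intro j hj
          simp only [Finset.mem_filter, Finset.mem_univ, true_and] at hj ⊢
          by_contra hji
          push_neg at hji
          have hij : i ≤ j := Fin.le_def.mpr hji
          have := hzm hij
          simp only [Function.comp_apply] at this
          linarith
        have hc := Finset.card_le_card hsub
        rw [card_filter_lt (i : ℕ) i.isLt.le] at hc
        omega
      have hB : ∀ i : Fin n, p ≤ (i : ℕ) → 0 ≤ z (σ i) := by
        intro i hi
        by_contra hcon
        push_neg at hcon
        have hsub : Finset.univ.filter (fun j : Fin n => (j : ℕ) < (i : ℕ) + 1)
            ⊆ Finset.univ.filter (fun j : Fin n => z (σ j) < 0) := by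
          intro j hj
          simp only [Finset.mem_filter, Finset.mem_univ, true_and] at hj ⊢
          have hji : j ≤ i := Fin.le_def.mpr (by omega)
          have := hzm hji
          simp only [Function.comp_apply] at this
          linarith
        have hc := Finset.card_le_card hsub
        rw [card_filter_lt ((i : ℕ) + 1) i.isLt] at hc
        omega
      have hform' := hform σ z hz hzm p hpn hA hB
      rw [hform']
      have hPset : Finset.univ.filter (fun i : Fin n => (i : ℕ) < p)
          = Finset.univ.filter (fun i : Fin n => z (σ i) < 0) := by
        ext i
        simp only [Finset.mem_filter, Finset.mem_univ, true_and]
        constructor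
        · exact hA i
        · intro hzi
          by_contra h
          push_neg at h
          exact absurd (hB i h) (not_le.mpr hzi)
      have hQset : Finset.univ.filter (fun i : Fin n => p ≤ (i : ℕ))
          = Finset.univ.filter (fun i : Fin n => ¬ z (σ i) < 0) := by
        ext i
        simp only [Finset.mem_filter, Finset.mem_univ, true_and]
        constructor
        · intro h; exact not_lt.mpr (hB i h)
        · intro h
          by_contra hc
          push_neg at hc
          exact h (hA i hc)
      rw [hPset, hQset]
      have e1 : ∑ i ∈ Finset.univ.filter (fun i : Fin n => z (σ i) < 0),
          (f (indTuple (SDown σ ((i : ℕ) + 1)) (z (σ i)))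
            - f (indTuple (SDown σ (i : ℕ)) (z (σ i))))
          = ∑ i ∈ Finset.univ.filter (fun i : Fin n => z (σ i) < 0), t (z (σ i)) (i : ℕ) := by
        refine Finset.sum_congr rfl fun i hi => ?_
        have := (Finset.mem_filter.mp hi).2
        rw [htdef]
        simp only [if_pos this]
      have e2 : ∑ i ∈ Finset.univ.filter (fun i : Fin n => ¬ z (σ i) < 0),
          (f (indTuple (SUp σ (i : ℕ)) (z (σ i)))
            - f (indTuple (SUp σ ((i : ℕ) + 1)) (z (σ i))))
          = ∑ i ∈ Finset.univ.filter (fun i : Fin n => ¬ z (σ i) < 0), t (z (σ i)) (i : ℕ) := by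
        refine Finset.sum_congr rfl fun i hi => ?_
        have := (Finset.mem_filter.mp hi).2
        rw [htdef]
        simp only [if_neg this]
      rw [e1, e2, add_assoc,
        Finset.sum_filter_add_sum_filter_not Finset.univ (fun i : Fin n => z (σ i) < 0)]
    have hterm : ∀ (a b : ℝ) (k : ℕ), t a k + t b k = t (min a b) k + t (max a b) k := by
      intro a b k
      rcases le_total a b with h | h
      · rw [min_eq_left h, max_eq_right h]
      · rw [min_eq_right h, max_eq_left h, add_comm]
    have h1 := general x hx hxm
    have h2 := general y hy hym
    have h3 := general (fun i => min (x i) (y i)) (fun i => min_mem' (hx i) (hy i))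
      (fun a b hab => min_le_min (hxm hab) (hym hab))
    have h4 := general (fun i => max (x i) (y i)) (fun i => max_mem' (hx i) (hy i))
      (fun a b hab => max_le_max (hxm hab) (hym hab))
    have hsum : (∑ i : Fin n, t (x (σ i)) (i : ℕ)) + (∑ i : Fin n, t (y (σ i)) (i : ℕ))
        = (∑ i : Fin n, t ((fun i => min (x i) (y i)) (σ i)) (i : ℕ))
          + (∑ i : Fin n, t ((fun i => max (x i) (y i)) (σ i)) (i : ℕ)) := by
      rw [← Finset.sum_add_distrib, ← Finset.sum_add_distrib]
      exact Finset.sum_congr rfl fun i _ => hterm (x (σ i)) (y (σ i)) (i : ℕ)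
    rw [h1, h2, h3, h4]
    linarith
end
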